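/- Let g and the Euclidean metric g_euc be Riemannian metrics on an open set U ⊆ ℝ³ with |g_{ij} - δ_{ij}|_{C¹(U)} < C₂ and |g^{ij} - δ_{ij}|_{C⁰(U)} < C₂ for all 1 ≤ i,j ≤ 3. Let S ⊆ U be an immersed C² surface without boundary whose second fundamental form Ā with respect to g satisfies |Ā| < C₁ on S. Then there is a constant C₃ > 0 depending only on C₁ and C₂ (not on S) such that the second fundamental form A of S with respect to g_euc satisfies |A| < C₃ on S. -/

import Mathlib

open scoped BigOperators

/-- Partial derivative in the `i`-th coordinate direction. -/
noncomputable def pderiv3 (i : Fin 3) (f : (Fin 3 → ℝ) → ℝ) (x : Fin 3 → ℝ) : ℝ :=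
  fderiv ℝ f x (Pi.single i 1)

/-- The Christoffel symbols `Γ^k_{ij}` of a metric `g` on (an open set of)
`ℝ³`, in Euclidean coordinates. -/
noncomputable def christoffel (g : (Fin 3 → ℝ) → Matrix (Fin 3) (Fin 3) ℝ)
    (x : Fin 3 → ℝ) (k i j : Fin 3) : ℝ :=
  (1 / 2) * ∑ l : Fin 3, (g x)⁻¹ k l *
    (pderiv3 i (fun y => g y j l) x + pderiv3 j (fun y => g y i l) x
      - pderiv3 l (fun y => g y i j) x)

/-- The inner product of two vectors with respect to the metric `g` at `x`. -/
def ginner (g : (Fin 3 → ℝ) → Matrix (Fin 3) (Fin 3) ℝ)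
    (x v w : Fin 3 → ℝ) : ℝ :=
  ∑ i : Fin 3, ∑ j : Fin 3, g x i j * v i * w j

/-- The `i`-th coordinate tangent vector of a parametrized surface
`X : ℝ² → ℝ³`. -/
noncomputable def tangentVec (X : (Fin 2 → ℝ) → Fin 3 → ℝ) (i : Fin 2)
    (u : Fin 2 → ℝ) : Fin 3 → ℝ :=
  fun k => fderiv ℝ (fun v => X v k) u (Pi.single i 1)

/-- The vector `∂²X/∂uᵢ∂uⱼ + Γ(X)(∂ᵢX, ∂ⱼX)` whose `g`-normal component is the
second fundamental form of the immersion `X` with respect to the metric `g`. -/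
noncomputable def sffVec (g : (Fin 3 → ℝ) → Matrix (Fin 3) (Fin 3) ℝ)
    (X : (Fin 2 → ℝ) → Fin 3 → ℝ) (i j : Fin 2) (u : Fin 2 → ℝ) :
    Fin 3 → ℝ :=
  fun k => fderiv ℝ (fun v => tangentVec X i v k) u (Pi.single j 1)
    + ∑ a : Fin 3, ∑ b : Fin 3,
        christoffel g (X u) k a b * tangentVec X i u a * tangentVec X j u b

/-- The second fundamental form `II_{ij}` of `X` with respect to the metric `g`
and the `g`-unit normal field `n`. -/
noncomputable def sff (g : (Fin 3 → ℝ) → Matrix (Fin 3) (Fin 3) ℝ)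
    (X : (Fin 2 → ℝ) → Fin 3 → ℝ) (n : (Fin 2 → ℝ) → Fin 3 → ℝ)
    (i j : Fin 2) (u : Fin 2 → ℝ) : ℝ :=
  ginner g (X u) (sffVec g X i j u) (n u)

/-- The first fundamental form `I_{ij}` of `X` with respect to `g`. -/
noncomputable def fff (g : (Fin 3 → ℝ) → Matrix (Fin 3) (Fin 3) ℝ)
    (X : (Fin 2 → ℝ) → Fin 3 → ℝ) (i j : Fin 2) (u : Fin 2 → ℝ) : ℝ :=
  ginner g (X u) (tangentVec X i u) (tangentVec X j u)

/-- The Euclidean metric on `ℝ³` (the identity matrix at every point). -/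
def euclMetric : (Fin 3 → ℝ) → Matrix (Fin 3) (Fin 3) ℝ := fun _ => 1

open Matrix

lemma ginner_eq_dot (g : (Fin 3 → ℝ) → Matrix (Fin 3) (Fin 3) ℝ) (x p q : Fin 3 → ℝ) :
    ginner g x p q = p ⬝ᵥ ((g x) *ᵥ q) := by
  simp only [ginner, dotProduct, Matrix.mulVec, Fin.sum_univ_three]
  ring

lemma ginner_symm {g : (Fin 3 → ℝ) → Matrix (Fin 3) (Fin 3) ℝ} {x : Fin 3 → ℝ}
    (hs : (g x).IsSymm) (p q : Fin 3 → ℝ) : ginner g x p q = ginner g x q p := by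
  simp only [ginner, Fin.sum_univ_three]
  rw [hs.apply 0 1, hs.apply 0 2, hs.apply 1 2, hs.apply 1 0, hs.apply 2 0, hs.apply 2 1]
  ring

lemma ginner_nonneg {g : (Fin 3 → ℝ) → Matrix (Fin 3) (Fin 3) ℝ} {x : Fin 3 → ℝ}
    (h : (g x).PosSemidef) (z : Fin 3 → ℝ) : 0 ≤ ginner g x z z := by
  rw [ginner_eq_dot]; simpa using h.dotProduct_mulVec_nonneg z

lemma ginner_cs {g : (Fin 3 → ℝ) → Matrix (Fin 3) (Fin 3) ℝ} {x : Fin 3 → ℝ}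
    (hs : (g x).IsSymm) (h : (g x).PosSemidef) (p q : Fin 3 → ℝ) :
    (ginner g x p q)^2 ≤ ginner g x p p * ginner g x q q := by
  have key : ∀ t : ℝ, 0 ≤ (ginner g x q q) * (t * t) + (2 * ginner g x p q) * t
      + ginner g x p p := by
    intro t
    have h0 := ginner_nonneg h (fun k => p k + t * q k)
    have hexp : ginner g x (fun k => p k + t * q k) (fun k => p k + t * q k)
        = (ginner g x q q) * (t * t) + (ginner g x p q + ginner g x q p) * t
          + ginner g x p p := by
      simp only [ginner, Fin.sum_univ_three]; ring
    rw [hexp, ginner_symm hs q p] at h0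
    linarith
  have hd := discrim_le_zero key
  simp only [discrim] at hd
  nlinarith [hd]

lemma mul_abs_le {e c y z : ℝ} (h : |e| ≤ c) : e * y * z ≤ c/2 * (y^2+z^2) := by
  have h1 : e*y*z ≤ |e| * (|y| * |z|) := by
    calc e*y*z ≤ |e*y*z| := le_abs_self _
    _ = |e| * (|y| * |z|) := by rw [abs_mul, abs_mul]; ring
  have h2 : |y| * |z| ≤ (y^2+z^2)/2 := by nlinarith [sq_abs y, sq_abs z, sq_nonneg (|y|-|z|)]
  have hc : 0 ≤ c := le_trans (abs_nonneg e) h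
  nlinarith [mul_nonneg (abs_nonneg y) (abs_nonneg z),
    mul_le_mul_of_nonneg_left h2 hc, mul_le_mul_of_nonneg_right h (mul_nonneg (abs_nonneg y) (abs_nonneg z))]

lemma abs_mul_abs_le {e c y z : ℝ} (h : |e| ≤ c) : |e * y * z| ≤ c/2 * (y^2+z^2) := by
  rw [abs_mul, abs_mul]
  have := mul_abs_le (e := |e|) (c := c) (y := |y|) (z := |z|) (by rwa [abs_abs])
  calc |e| * |y| * |z| ≤ c/2*(|y|^2+|z|^2) := this
  _ = c/2*(y^2+z^2) := by rw [sq_abs, sq_abs]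


lemma christoffel_eucl (x : Fin 3 → ℝ) (k i j : Fin 3) : christoffel euclMetric x k i j = 0 := by
  simp [christoffel, euclMetric, pderiv3]


lemma ginner_eucl (x p q : Fin 3 → ℝ) :
    ginner euclMetric x p q = ∑ k : Fin 3, p k * q k := by
  simp [ginner, euclMetric, Matrix.one_apply, Fin.sum_univ_three]

lemma sffVec_eucl (X : (Fin 2 → ℝ) → Fin 3 → ℝ) (i j : Fin 2) (u : Fin 2 → ℝ) :
    sffVec euclMetric X i j u
      = fun k => fderiv ℝ (fun v => tangentVec X i v k) u (Pi.single j 1) := by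
  funext k
  simp [sffVec, christoffel_eucl]

lemma ginner_right_comb (g : (Fin 3 → ℝ) → Matrix (Fin 3) (Fin 3) ℝ)
    (x p q r : Fin 3 → ℝ) (a b : ℝ) :
    ginner g x p (a • q + b • r) = a * ginner g x p q + b * ginner g x p r := by
  simp only [ginner, Pi.add_apply, Pi.smul_apply, smul_eq_mul, Fin.sum_univ_three]
  ring

lemma tri_abs {d1 d2 d3 cd : ℝ} (h1 : |d1| ≤ cd) (h2 : |d2| ≤ cd) (h3 : |d3| ≤ cd) :
    |d1 + d2 - d3| ≤ 3 * cd := by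
  calc |d1 + d2 - d3| ≤ |d1 + d2| + |d3| := abs_sub _ _
  _ ≤ |d1| + |d2| + |d3| := by linarith [abs_add_le d1 d2]
  _ ≤ 3 * cd := by linarith

set_option maxHeartbeats 2000000 in
/-- Appendix Proposition: if `g` is a `C¹` metric on an open set `U ⊆ ℝ³` with
`|g_{ij} - δ_{ij}|_{C¹(U)} < C₂` and `|g^{ij} - δ_{ij}|_{C⁰(U)} < C₂`, and
`S = X(D)` is an immersed `C²` surface without boundary in `U` whose second
fundamental form w.r.t. `g` satisfies `|Ā| < C₁` (i.e.
`|II(v,v)| ≤ C₁ · I(v,v)` for all tangent directions `v`, for every choice of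
`g`-unit normal `n`), then there is `C₃ > 0` depending only on `C₁, C₂` (not
on `S`) such that the Euclidean second fundamental form of `S` satisfies
`|A| < C₃`, i.e. `|II_euc(v,v)| ≤ C₃ · I_euc(v,v)`. -/
theorem sff_comparison (C₁ C₂ : ℝ) (hC₁ : 0 < C₁) (hC₂ : 0 < C₂) :
    ∃ C₃ > (0:ℝ), ∀ (U : Set (Fin 3 → ℝ)), IsOpen U →
      ∀ g : (Fin 3 → ℝ) → Matrix (Fin 3) (Fin 3) ℝ,
      -- g is a C¹ Riemannian metric on U
      (∀ i j : Fin 3, ContDiffOn ℝ 1 (fun y => g y i j) U) →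
      (∀ x ∈ U, (g x).PosDef) → (∀ x ∈ U, (g x).IsSymm) →
      -- C⁰ and C¹ closeness of g to the Euclidean metric, and C⁰ closeness
      -- of the inverse metric
      (∀ x ∈ U, ∀ i j : Fin 3,
        |g x i j - (1 : Matrix (Fin 3) (Fin 3) ℝ) i j| < C₂ ∧
        (∀ k : Fin 3, |pderiv3 k (fun y => g y i j) x| < C₂) ∧
        |(g x)⁻¹ i j - (1 : Matrix (Fin 3) (Fin 3) ℝ) i j| < C₂) →
      ∀ (D : Set (Fin 2 → ℝ)), IsOpen D →
      ∀ X : (Fin 2 → ℝ) → Fin 3 → ℝ,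
      -- X is a C² immersion of D into U
      ContDiffOn ℝ 2 X D → (∀ u ∈ D, X u ∈ U) →
      (∀ u ∈ D, LinearIndependent ℝ ![tangentVec X 0 u, tangentVec X 1 u]) →
      -- n is a g-unit normal field along X, nE a Euclidean unit normal field
      ∀ n nE : (Fin 2 → ℝ) → Fin 3 → ℝ,
      (∀ u ∈ D, ginner g (X u) (n u) (n u) = 1 ∧
        ∀ i : Fin 2, ginner g (X u) (n u) (tangentVec X i u) = 0) →
      (∀ u ∈ D, ginner euclMetric (X u) (nE u) (nE u) = 1 ∧
        ∀ i : Fin 2, ginner euclMetric (X u) (nE u) (tangentVec X i u) = 0) →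
      -- the second fundamental form w.r.t. g is bounded by C₁
      (∀ u ∈ D, ∀ v : Fin 2 → ℝ,
        |∑ i : Fin 2, ∑ j : Fin 2, v i * v j * sff g X n i j u|
          ≤ C₁ * ∑ i : Fin 2, ∑ j : Fin 2, v i * v j * fff g X i j u) →
      -- conclusion: the Euclidean second fundamental form is bounded by C₃
      ∀ u ∈ D, ∀ v : Fin 2 → ℝ,
        |∑ i : Fin 2, ∑ j : Fin 2, v i * v j * sff euclMetric X nE i j u|
          ≤ C₃ * ∑ i : Fin 2, ∑ j : Fin 2, v i * v j * fff euclMetric X i j u := by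
  refine ⟨C₁*(1+3*C₂)^2 + 41*(C₂*(1+C₂)), by nlinarith, ?_⟩
  intro U hU g hg hpos hsym hclose D hD X hX hXU himm n nE hn hnE hA u hu v
  have hxU : X u ∈ U := hXU u hu
  obtain ⟨hn1, hno⟩ := hn u hu
  obtain ⟨hnE1, hnEo⟩ := hnE u hu
  have hA' := hA u hu v
  have li2 := himm u hu
  have hGpos := hpos _ hxU
  have hGsym := hsym _ hxU
  have hcl := hclose _ hxU
  set x := X u with hx
  set t0 := tangentVec X 0 u with ht0
  set t1 := tangentVec X 1 u with ht1
  set nu := n u with hnu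
  set nEu := nE u with hnEu
  set w : Fin 3 → ℝ := fun k => v 0 * t0 k + v 1 * t1 k with hwdef
  set W : Fin 3 → ℝ :=
    fun k => ∑ i : Fin 2, ∑ j : Fin 2, v i * v j * sffVec g X i j u k with hWdef
  set Gam : Fin 3 → ℝ :=
    fun k => ∑ a : Fin 3, ∑ b : Fin 3, christoffel g x k a b * w a * w b with hGamdef
  clear_value x t0 t1 nu nEu w W Gam
  have hno0 : ginner g x nu t0 = 0 := by rw [ht0]; exact hno 0
  have hno1 : ginner g x nu t1 = 0 := by rw [ht1]; exact hno 1
  have hnEo0 : ginner euclMetric x nEu t0 = 0 := by rw [ht0]; exact hnEo 0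
  have hnEo1 : ginner euclMetric x nEu t1 = 0 := by rw [ht1]; exact hnEo 1
  -- the euclidean first fundamental form is |w|²
  have hE : ∑ i : Fin 2, ∑ j : Fin 2, v i * v j * fff euclMetric X i j u
      = ∑ k : Fin 3, (w k)^2 := by
    simp only [fff, ginner_eucl, hwdef, ← hx, ← ht0, ← ht1,
      Fin.sum_univ_two, Fin.sum_univ_three]
    ring
  have hEpos : 0 ≤ ∑ k : Fin 3, (w k)^2 := by positivity
  -- the g first fundamental form is ginner g x w w
  have hFg : ∑ i : Fin 2, ∑ j : Fin 2, v i * v j * fff g X i j u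
      = ginner g x w w := by
    simp only [fff, ginner, hwdef, ← hx, ← ht0, ← ht1,
      Fin.sum_univ_two, Fin.sum_univ_three]
    ring
  -- comparison of first fundamental forms
  have hFgle : ginner g x w w ≤ (1+3*C₂) * ∑ k : Fin 3, (w k)^2 := by
    have d00 := mul_abs_le (y := w 0) (z := w 0) (by simpa using (hcl 0 0).1.le)
    have d11 := mul_abs_le (y := w 1) (z := w 1) (by simpa using (hcl 1 1).1.le)
    have d22 := mul_abs_le (y := w 2) (z := w 2) (by simpa using (hcl 2 2).1.le)
    have e01 := mul_abs_le (y := w 0) (z := w 1) (by simpa using (hcl 0 1).1.le)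
    have e02 := mul_abs_le (y := w 0) (z := w 2) (by simpa using (hcl 0 2).1.le)
    have e10 := mul_abs_le (y := w 1) (z := w 0) (by simpa using (hcl 1 0).1.le)
    have e12 := mul_abs_le (y := w 1) (z := w 2) (by simpa using (hcl 1 2).1.le)
    have e20 := mul_abs_le (y := w 2) (z := w 0) (by simpa using (hcl 2 0).1.le)
    have e21 := mul_abs_le (y := w 2) (z := w 1) (by simpa using (hcl 2 1).1.le)
    simp only [ginner, Fin.sum_univ_three]
    nlinarith [d00, d11, d22, e01, e02, e10, e12, e20, e21]
  -- second fundamental form w.r.t. g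
  have hSg : ∑ i : Fin 2, ∑ j : Fin 2, v i * v j * sff g X n i j u
      = ginner g x W nu := by
    simp only [sff, ginner, hWdef, ← hx, ← hnu, Fin.sum_univ_two, Fin.sum_univ_three]
    ring
  -- second fundamental form w.r.t. the euclidean metric
  have hSe : ∑ i : Fin 2, ∑ j : Fin 2, v i * v j * sff euclMetric X nE i j u
      = (∑ k : Fin 3, W k * nEu k) - ∑ k : Fin 3, Gam k * nEu k := by
    simp only [sff, ginner_eucl, sffVec_eucl, hWdef, hGamdef, hwdef, sffVec,
      Fin.sum_univ_two, Fin.sum_univ_three, ← hx, ← ht0, ← ht1, ← hnEu]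
    ring
  -- the decomposition of W in the basis (t0, t1, nu)
  have li3 : LinearIndependent ℝ ![t0, t1, nu] := by
    have hsnoc : ![t0, t1, nu] = Fin.snoc ![t0, t1] nu := by
      funext i; fin_cases i <;> rfl
    rw [hsnoc, linearIndependent_fin_snoc]
    refine ⟨li2, ?_⟩
    intro hmem
    have hrange : Set.range ![t0, t1] = {t0, t1} := by
      simp [Matrix.range_cons, Matrix.range_empty, Set.pair_comm]
    rw [hrange, Submodule.mem_span_pair] at hmem
    obtain ⟨a, b, hab⟩ := hmem
    nth_rewrite 2 [← hab] at hn1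
    rw [ginner_right_comb, hno0, hno1] at hn1
    norm_num at hn1
  have hcard : Fintype.card (Fin 3) = Module.finrank ℝ (Fin 3 → ℝ) := by simp
  obtain ⟨a, b, c, hWc⟩ :
      ∃ a b c : ℝ, ∀ k, W k = a * t0 k + b * t1 k + c * nu k := by
    set B := basisOfLinearIndependentOfCardEqFinrank li3 hcard with hB
    refine ⟨B.repr W 0, B.repr W 1, B.repr W 2, fun k => ?_⟩
    conv_lhs => rw [← B.sum_repr W]
    simp [hB, coe_basisOfLinearIndependentOfCardEqFinrank, Fin.sum_univ_three]
  -- the g-normal component of W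
  have hc : ginner g x W nu = c := by
    have h1 : ginner g x W nu
        = a * ginner g x t0 nu + b * ginner g x t1 nu + c * ginner g x nu nu := by
      simp only [ginner, Fin.sum_univ_three, hWc]
      ring
    rw [h1, ginner_symm hGsym t0 nu, ginner_symm hGsym t1 nu, hno0, hno1, hn1]
    ring
  -- the euclidean pairing of W with nEu
  have hWnE : ∑ k : Fin 3, W k * nEu k = c * ∑ k : Fin 3, nu k * nEu k := by
    have o0 := hnEo0
    have o1 := hnEo1
    rw [ginner_eucl] at o0 o1
    simp only [Fin.sum_univ_three, hWc] at *
    linear_combination a * o0 + b * o1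
  -- |nEu| = 1
  have hne2 : ∑ k : Fin 3, (nEu k)^2 = 1 := by
    rw [ginner_eucl] at hnE1
    simp only [Fin.sum_univ_three] at hnE1 ⊢
    nlinarith [hnE1]
  -- |nu|² ≤ 1 + 3C₂
  have hNle : ∑ k : Fin 3, (nu k)^2 ≤ 1 + 3*C₂ := by
    have hdet : IsUnit (g x).det := isUnit_iff_ne_zero.mpr hGpos.det_pos.ne'
    have hginv : (g x) * (g x)⁻¹ = 1 := Matrix.mul_nonsing_inv _ hdet
    set m : Fin 3 → ℝ := (g x)⁻¹ *ᵥ nu with hm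
    have hBnm : ginner g x nu m = ∑ k : Fin 3, (nu k)^2 := by
      rw [ginner_eq_dot, hm, Matrix.mulVec_mulVec, hginv, Matrix.one_mulVec]
      simp [dotProduct, pow_two, Fin.sum_univ_three]
    have hmv : (g x) *ᵥ m = nu := by
      rw [hm, Matrix.mulVec_mulVec, hginv, Matrix.one_mulVec]
    have hBmm : ginner g x m m
        = ∑ i : Fin 3, ∑ j : Fin 3, (g x)⁻¹ i j * nu j * nu i := by
      rw [ginner_eq_dot, hmv, hm]
      simp only [dotProduct, Matrix.mulVec, Fin.sum_univ_three]
      ring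
    have i00 := mul_abs_le (y := nu 0) (z := nu 0) (by simpa using (hcl 0 0).2.2.le)
    have i11 := mul_abs_le (y := nu 1) (z := nu 1) (by simpa using (hcl 1 1).2.2.le)
    have i22 := mul_abs_le (y := nu 2) (z := nu 2) (by simpa using (hcl 2 2).2.2.le)
    have i01 := mul_abs_le (y := nu 1) (z := nu 0) (by simpa using (hcl 0 1).2.2.le)
    have i02 := mul_abs_le (y := nu 2) (z := nu 0) (by simpa using (hcl 0 2).2.2.le)
    have i10 := mul_abs_le (y := nu 0) (z := nu 1) (by simpa using (hcl 1 0).2.2.le)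
    have i12 := mul_abs_le (y := nu 2) (z := nu 1) (by simpa using (hcl 1 2).2.2.le)
    have i20 := mul_abs_le (y := nu 0) (z := nu 2) (by simpa using (hcl 2 0).2.2.le)
    have i21 := mul_abs_le (y := nu 1) (z := nu 2) (by simpa using (hcl 2 1).2.2.le)
    have hBmmle : ginner g x m m ≤ (1+3*C₂) * ∑ k : Fin 3, (nu k)^2 := by
      rw [hBmm]
      simp only [Fin.sum_univ_three]
      nlinarith [i00, i11, i22, i01, i02, i10, i12, i20, i21]
    have hcs := ginner_cs hGsym hGpos.posSemidef nu m
    rw [hBnm, hn1, one_mul] at hcs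
    have hNpos : 0 ≤ ∑ k : Fin 3, (nu k)^2 := by positivity
    nlinarith [hcs, hBmmle, hNpos]
  -- |⟨nu, nEu⟩| ≤ 1 + 3C₂
  have hdot : |∑ k : Fin 3, nu k * nEu k| ≤ 1 + 3*C₂ := by
    have csq := Finset.sum_mul_sq_le_sq_mul_sq Finset.univ nu nEu
    rw [abs_le]
    constructor <;> nlinarith [csq, hNle, hne2, hEpos,
      sq_nonneg (∑ k : Fin 3, nu k * nEu k)]
  -- the Christoffel correction term
  have hGamma : |∑ k : Fin 3, Gam k * nEu k|
      ≤ 41*(C₂*(1+C₂)) * ∑ k : Fin 3, (w k)^2 := by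
    have hCh : ∀ k a b : Fin 3, |christoffel g x k a b| ≤ (9/2)*(C₂*(1+C₂)) := by
      intro k a b
      have hterm : ∀ l : Fin 3, |(g x)⁻¹ k l *
          (pderiv3 a (fun y => g y b l) x + pderiv3 b (fun y => g y a l) x
            - pderiv3 l (fun y => g y a b) x)| ≤ (1+C₂) * (3*C₂) := by
        intro l
        have h1 := (hcl k l).2.2
        have h2 : |(1 : Matrix (Fin 3) (Fin 3) ℝ) k l| ≤ 1 := by
          by_cases h : k = l <;> simp [Matrix.one_apply, h]
        have hQ : |(g x)⁻¹ k l| ≤ 1 + C₂ := by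
          calc |(g x)⁻¹ k l|
              = |((g x)⁻¹ k l - (1 : Matrix (Fin 3) (Fin 3) ℝ) k l)
                + (1 : Matrix (Fin 3) (Fin 3) ℝ) k l| := by ring_nf
          _ ≤ |(g x)⁻¹ k l - (1 : Matrix (Fin 3) (Fin 3) ℝ) k l|
                + |(1 : Matrix (Fin 3) (Fin 3) ℝ) k l| := abs_add_le _ _
          _ ≤ 1 + C₂ := by linarith
        have hbr := tri_abs ((hcl b l).2.1 a).le ((hcl a l).2.1 b).le ((hcl a b).2.1 l).le
        rw [abs_mul]
        exact mul_le_mul hQ hbr (abs_nonneg _) (by linarith [abs_nonneg ((g x)⁻¹ k l)])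
      have hsum : |christoffel g x k a b|
          ≤ 1/2 * ∑ _l : Fin 3, ((1+C₂) * (3*C₂)) := by
        rw [christoffel, abs_mul]
        have h12 : |(1:ℝ)/2| = 1/2 := by norm_num
        rw [h12]
        refine mul_le_mul_of_nonneg_left ?_ (by norm_num)
        exact (Finset.abs_sum_le_sum_abs _ _).trans (Finset.sum_le_sum fun l _ => hterm l)
      simp only [Finset.sum_const, Finset.card_univ, Fintype.card_fin, nsmul_eq_mul] at hsum
      nlinarith [hsum]
    have hGamk : ∀ k : Fin 3, |Gam k| ≤ (27/2)*(C₂*(1+C₂)) * ∑ k : Fin 3, (w k)^2 := by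
      intro k
      have habs2 : |Gam k| ≤ ∑ a : Fin 3, ∑ b : Fin 3, |christoffel g x k a b * w a * w b| := by
        rw [hGamdef]
        exact (Finset.abs_sum_le_sum_abs _ _).trans
          (Finset.sum_le_sum fun a _ => Finset.abs_sum_le_sum_abs _ _)
      have ht : ∀ a b : Fin 3, |christoffel g x k a b * w a * w b|
          ≤ ((9/2)*(C₂*(1+C₂)))/2 * ((w a)^2 + (w b)^2) :=
        fun a b => abs_mul_abs_le (hCh k a b)
      simp only [Fin.sum_univ_three] at habs2 ⊢
      linarith [habs2, ht 0 0, ht 0 1, ht 0 2, ht 1 0, ht 1 1, ht 1 2, ht 2 0, ht 2 1, ht 2 2]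
    have hne2' := hne2
    simp only [Fin.sum_univ_three] at hne2'
    have hnE0 : |nEu 0| ≤ 1 := by
      rw [abs_le]; constructor <;> nlinarith [sq_nonneg (nEu 1), sq_nonneg (nEu 2),
        sq_nonneg (nEu 0 + 1), sq_nonneg (nEu 0 - 1)]
    have hnE1' : |nEu 1| ≤ 1 := by
      rw [abs_le]; constructor <;> nlinarith [sq_nonneg (nEu 0), sq_nonneg (nEu 2),
        sq_nonneg (nEu 1 + 1), sq_nonneg (nEu 1 - 1)]
    have hnE2 : |nEu 2| ≤ 1 := by
      rw [abs_le]; constructor <;> nlinarith [sq_nonneg (nEu 0), sq_nonneg (nEu 1),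
        sq_nonneg (nEu 2 + 1), sq_nonneg (nEu 2 - 1)]
    have hbnd : (0:ℝ) ≤ (27/2)*(C₂*(1+C₂)) * ∑ k : Fin 3, (w k)^2 :=
      mul_nonneg (by nlinarith) hEpos
    have ht2 : ∀ k : Fin 3, |Gam k * nEu k|
        ≤ (27/2)*(C₂*(1+C₂)) * ∑ k : Fin 3, (w k)^2 := by
      intro k
      rw [abs_mul]
      have hk : |nEu k| ≤ 1 := by fin_cases k <;> assumption
      calc |Gam k| * |nEu k| ≤ ((27/2)*(C₂*(1+C₂)) * ∑ k : Fin 3, (w k)^2) * 1 :=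
        mul_le_mul (hGamk k) hk (abs_nonneg _) hbnd
      _ = _ := by ring
    have h5 := Finset.abs_sum_le_sum_abs (fun k => Gam k * nEu k) (Finset.univ : Finset (Fin 3))
    simp only [Fin.sum_univ_three] at h5 ⊢
    have e0 := ht2 0; have e1 := ht2 1; have e2 := ht2 2
    simp only [Fin.sum_univ_three] at e0 e1 e2 hEpos
    have hprod : (0:ℝ) ≤ C₂ * (1+C₂) * (w 0^2 + w 1^2 + w 2^2) :=
      mul_nonneg (by nlinarith) hEpos
    linarith [h5, e0, e1, e2, hprod]
  -- final assembly
  have hgWnorm : |ginner g x W nu| ≤ C₁ * ((1+3*C₂) * ∑ k : Fin 3, (w k)^2) := by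
    rw [hSg, hFg] at hA'
    calc |ginner g x W nu| ≤ C₁ * ginner g x w w := hA'
    _ ≤ C₁ * ((1+3*C₂) * ∑ k : Fin 3, (w k)^2) :=
      mul_le_mul_of_nonneg_left hFgle hC₁.le
  have h2 : |ginner g x W nu| * |∑ k : Fin 3, nu k * nEu k|
      ≤ (C₁ * ((1+3*C₂) * ∑ k : Fin 3, (w k)^2)) * (1+3*C₂) :=
    mul_le_mul hgWnorm hdot (abs_nonneg _) (by positivity)
  rw [hE, hSe, hWnE, ← hc]
  have habs : |ginner g x W nu * ∑ k : Fin 3, nu k * nEu k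
        - ∑ k : Fin 3, Gam k * nEu k|
      ≤ |ginner g x W nu| * |∑ k : Fin 3, nu k * nEu k|
        + |∑ k : Fin 3, Gam k * nEu k| := by
    calc _ ≤ |ginner g x W nu * ∑ k : Fin 3, nu k * nEu k|
        + |∑ k : Fin 3, Gam k * nEu k| := abs_sub _ _
    _ = _ := by rw [abs_mul]
  nlinarith [habs, h2, hGamma, hEpos]
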